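/- The free group F₂ on two generators a, b does not have the Fřlner property: there exist ε > 0 such that for every nonempty finite subset F ⊆ F₂ there is some k ∈ {a, b, a⁻¹, b⁻¹} with |F Δ kF| ≥ ε|F|. In particular, F₂ admits no Fřlner sequence. -/

import Mathlib

open Filter Pointwise

lemma key10 (i : Fin 2) (w : FreeGroup (Fin 2)) (h : w.toWord.head? ≠ some (i, true)) :
    ((FreeGroup.of i)⁻¹ * w).toWord = (i, false) :: w.toWord := by
  have h1 : (FreeGroup.of i)⁻¹ * w = FreeGroup.mk ((i, false) :: w.toWord) := by
    conv_lhs => rw [← FreeGroup.mk_toWord (x := w)]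
    rw [show FreeGroup.of i = FreeGroup.mk [(i, true)] from rfl, FreeGroup.inv_mk,
      FreeGroup.mul_mk]
    rfl
  rw [h1, FreeGroup.toWord_mk, FreeGroup.reduce.cons, FreeGroup.reduce_toWord]
  cases hw : w.toWord with
  | nil => rfl
  | cons y t =>
    have : ¬ ((i, false).1 = y.1 ∧ (i, false).2 = !y.2) := by
      rintro ⟨h1', h2'⟩
      apply h
      rw [hw]
      obtain ⟨y1, y2⟩ := y
      simp at h1' h2'
      simp [h1', h2'.symm]
    simp only [this, if_false]

lemma per_gen10 [DecidableEq (FreeGroup (Fin 2))] (i : Fin 2)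
    (F : Finset (FreeGroup (Fin 2))) :
    F.card ≤ (F.filter (fun w => w.toWord.head? = some (i, true))).card
      + (F.filter (fun w => w.toWord.head? = some (i, false))).card
      + (symmDiff F ((FreeGroup.of i)⁻¹ • F)).card := by
  set g := (FreeGroup.of i)⁻¹ with hg
  have hsplit := Finset.card_filter_add_card_filter_not
    (s := F) (p := fun w => w.toWord.head? = some (i, true))
  have hinj : (F.filter (fun w => ¬ w.toWord.head? = some (i, true))).card
      ≤ ((g • F).filter (fun w => w.toWord.head? = some (i, false))).card := by
    apply Finset.card_le_card_of_injOn (fun w => g * w)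
    · intro w hw
      simp only [Finset.mem_coe, Finset.mem_filter] at hw ⊢
      exact ⟨Finset.smul_mem_smul_finset hw.1, by rw [hg, key10 i w hw.2]; rfl⟩
    · intro x _ y _ hxy
      exact mul_left_cancel hxy
  have hsub : ((g • F).filter (fun w => w.toWord.head? = some (i, false)))
      ⊆ (F.filter (fun w => w.toWord.head? = some (i, false))) ∪ ((g • F) \ F) := by
    intro x hx
    simp only [Finset.mem_filter, Finset.mem_union, Finset.mem_sdiff] at hx ⊢
    by_cases hxF : x ∈ F
    · exact Or.inl ⟨hxF, hx.2⟩
    · exact Or.inr ⟨hx.1, hxF⟩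
  have hsd : ((g • F) \ F).card ≤ (symmDiff F (g • F)).card := by
    apply Finset.card_le_card
    intro x hx
    simp only [Finset.mem_sdiff] at hx
    rw [Finset.mem_symmDiff]
    exact Or.inr ⟨hx.1, hx.2⟩
  have := (Finset.card_le_card hsub).trans (Finset.card_union_le _ _)
  omega

lemma four_filters10 [DecidableEq (FreeGroup (Fin 2))] (F : Finset (FreeGroup (Fin 2))) :
    (F.filter (fun w => w.toWord.head? = some ((0 : Fin 2), true))).card
      + (F.filter (fun w => w.toWord.head? = some ((0 : Fin 2), false))).card
      + ((F.filter (fun w => w.toWord.head? = some ((1 : Fin 2), true))).card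
      + (F.filter (fun w => w.toWord.head? = some ((1 : Fin 2), false))).card) ≤ F.card := by
  have gen : ∀ v₁ v₂ : Option (Fin 2 × Bool), v₁ ≠ v₂ →
      Disjoint (F.filter (fun w => w.toWord.head? = v₁))
        (F.filter (fun w => w.toWord.head? = v₂)) := by
    intro v₁ v₂ hne
    rw [Finset.disjoint_filter]
    intro x _ h1 h2
    exact hne (h1 ▸ h2 ▸ rfl)
  set A := F.filter (fun w => w.toWord.head? = some ((0 : Fin 2), true))
  set B := F.filter (fun w => w.toWord.head? = some ((0 : Fin 2), false))
  set C := F.filter (fun w => w.toWord.head? = some ((1 : Fin 2), true))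
  set D := F.filter (fun w => w.toWord.head? = some ((1 : Fin 2), false))
  have dAB : Disjoint A B := gen _ _ (by decide)
  have dAC : Disjoint A C := gen _ _ (by decide)
  have dAD : Disjoint A D := gen _ _ (by decide)
  have dBC : Disjoint B C := gen _ _ (by decide)
  have dBD : Disjoint B D := gen _ _ (by decide)
  have dCD : Disjoint C D := gen _ _ (by decide)
  have e1 : A.card + B.card = (A ∪ B).card := (Finset.card_union_of_disjoint dAB).symm
  have e2 : (A ∪ B).card + C.card = (A ∪ B ∪ C).card :=
    (Finset.card_union_of_disjoint (Finset.disjoint_union_left.2 ⟨dAC, dBC⟩)).symm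
  have e3 : (A ∪ B ∪ C).card + D.card = (A ∪ B ∪ C ∪ D).card :=
    (Finset.card_union_of_disjoint (Finset.disjoint_union_left.2
      ⟨Finset.disjoint_union_left.2 ⟨dAD, dBD⟩, dCD⟩)).symm
  have hsub : A ∪ B ∪ C ∪ D ⊆ F := by
    simp only [Finset.union_subset_iff]
    exact ⟨⟨⟨Finset.filter_subset _ _, Finset.filter_subset _ _⟩, Finset.filter_subset _ _⟩,
      Finset.filter_subset _ _⟩
  have := Finset.card_le_card hsub
  omega

/-- The free group on two generators does not have the Følner property, and hence admits no
Følner sequence. -/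
theorem stmt_10 [DecidableEq (FreeGroup (Fin 2))] :
    (∃ ε : ℝ, 0 < ε ∧ ∀ F : Finset (FreeGroup (Fin 2)), F.Nonempty →
      ∃ k ∈ ({FreeGroup.of 0, FreeGroup.of 1, (FreeGroup.of 0)⁻¹, (FreeGroup.of 1)⁻¹} :
          Finset (FreeGroup (Fin 2))),
        ε * F.card ≤ ((symmDiff F (k • F)).card : ℝ)) ∧
    ¬ ∃ F : ℕ → Finset (FreeGroup (Fin 2)), (∀ n, (F n).Nonempty) ∧
      ∀ g : FreeGroup (Fin 2),
        Tendsto (fun n => ((symmDiff (F n) (g • F n)).card : ℝ) / (F n).card)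
          atTop (nhds 0) := by
  have main : ∀ F : Finset (FreeGroup (Fin 2)), F.Nonempty →
      ∃ k ∈ ({FreeGroup.of 0, FreeGroup.of 1, (FreeGroup.of 0)⁻¹, (FreeGroup.of 1)⁻¹} :
          Finset (FreeGroup (Fin 2))),
        (1/2 : ℝ) * F.card ≤ ((symmDiff F (k • F)).card : ℝ) := by
    intro F _
    have h0 := per_gen10 0 F
    have h1 := per_gen10 1 F
    have h4 := four_filters10 F
    set D0 := (symmDiff F ((FreeGroup.of (0 : Fin 2))⁻¹ • F)).card with hD0
    set D1 := (symmDiff F ((FreeGroup.of (1 : Fin 2))⁻¹ • F)).card with hD1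
    have hsum : F.card ≤ D0 + D1 := by omega
    rcases le_total D0 D1 with h | h
    · refine ⟨(FreeGroup.of (1 : Fin 2))⁻¹, by simp, ?_⟩
      have h2 : F.card ≤ 2 * D1 := by omega
      have : (F.card : ℝ) ≤ 2 * D1 := by exact_mod_cast h2
      rw [← hD1]
      linarith
    · refine ⟨(FreeGroup.of (0 : Fin 2))⁻¹, by simp, ?_⟩
      have h2 : F.card ≤ 2 * D0 := by omega
      have : (F.card : ℝ) ≤ 2 * D0 := by exact_mod_cast h2
      rw [← hD0]
      linarith
  refine ⟨⟨1/2, by norm_num, main⟩, ?_⟩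
  rintro ⟨F, hne, ht⟩
  have e : ∀ g : FreeGroup (Fin 2), ∀ᶠ n in atTop,
      ((symmDiff (F n) (g • F n)).card : ℝ) / (F n).card < 1/2 := by
    intro g
    exact (ht g).eventually_lt_const (by norm_num)
  obtain ⟨n, e0, e1, e2, e3⟩ := ((e (FreeGroup.of (0 : Fin 2))).and ((e (FreeGroup.of (1 : Fin 2))).and
    ((e (FreeGroup.of (0 : Fin 2))⁻¹).and (e (FreeGroup.of (1 : Fin 2))⁻¹)))).exists
  obtain ⟨k, hk, hge⟩ := main (F n) (hne n)
  have hcard : (0:ℝ) < (F n).card := by exact_mod_cast (hne n).card_pos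
  have hrat : (1/2:ℝ) ≤ ((symmDiff (F n) (k • F n)).card : ℝ) / (F n).card := by
    rw [le_div_iff₀ hcard]
    linarith
  simp only [Finset.mem_insert, Finset.mem_singleton] at hk
  rcases hk with rfl | rfl | rfl | rfl
  · linarith
  · linarith
  · linarith
  · linarith
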